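/- Let F ∈ B_c(T) be real-valued and let n be a nonzero integer. Then the Fourier coefficient of f = F′ satisfies |f̂(n)| ≤ 4√2·|n|·‖f‖_T; explicitly, |(−1)^n F(π) + i n ∫_{−π}^{π} F(t) e^{−int} dt| ≤ 4√2·|n|·sup{ |F(β) − F(α)| : α ≤ β ≤ α + 2π }. -/

import Mathlib

open MeasureTheory Real

/-- For a real-valued primitive `F ∈ B_c(𝕋)` and nonzero `n ∈ ℤ`,
the Fourier coefficient of `f = F'` satisfies `|f̂(n)| ≤ 4√2 |n| ‖f‖_𝕋`. -/
theorem fourier_coeff_le_alexiewicz (F : ℝ → ℝ)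
    (hFcont : Continuous F) (hF0 : F (-π) = 0)
    (hFper : ∀ x : ℝ, F (x + 2 * π) = F x + F π)
    (n : ℤ) (hn : n ≠ 0) :
    ‖(-1 : ℂ) ^ n * (F π : ℂ)
        + Complex.I * (n : ℂ) *
          ∫ t in (-π)..π, (F t : ℂ) * Complex.exp (-Complex.I * (n : ℂ) * (t : ℂ))‖
      ≤ 4 * Real.sqrt 2 * |(n : ℝ)| *
        sSup {r : ℝ | ∃ α β : ℝ, α ≤ β ∧ β ≤ α + 2 * π ∧ r = |F β - F α|} := by
  have hπ : (0:ℝ) < π := Real.pi_pos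
  set S := {r : ℝ | ∃ α β : ℝ, α ≤ β ∧ β ≤ α + 2 * π ∧ r = |F β - F α|} with hS
  -- quasi-periodicity for integer multiples
  have hzk : ∀ k : ℤ, ∀ x : ℝ, F (x + 2*π*k) = F x + k * F π := by
    intro k
    induction k using Int.induction_on with
    | zero => intro x; simp
    | succ i ih =>
      intro x
      have h1 : x + 2*π*(((i:ℤ)+1 : ℤ):ℝ) = (x + 2*π*((i:ℤ):ℝ)) + 2*π := by push_cast; ring
      rw [h1, hFper]
      have h2 := ih x
      push_cast at h2 ⊢
      linarith
    | pred i ih =>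
      intro x
      have h1 : x + 2*π*((-(i:ℤ)-1 : ℤ):ℝ) + 2*π = x + 2*π*((-(i:ℤ) : ℤ):ℝ) := by push_cast; ring
      have h2 := hFper (x + 2*π*((-(i:ℤ)-1 : ℤ):ℝ))
      rw [h1] at h2
      have h3 := ih x
      push_cast at h2 h3 ⊢
      linarith
  -- bound on compact interval
  obtain ⟨K, hK⟩ := isCompact_Icc.exists_bound_of_continuousOn
    (s := Set.Icc (-π) π) hFcont.continuousOn
  have hK' : ∀ x ∈ Set.Icc (-π) π, |F x| ≤ K := by
    intro x hx; simpa [Real.norm_eq_abs] using hK x hx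
  have hK0 : 0 ≤ K := le_trans (abs_nonneg _) (hK' π ⟨by linarith, le_rfl⟩)
  have hK3 : ∀ x ∈ Set.Icc (-π) (3*π), |F x| ≤ 2*K := by
    intro x hx
    obtain ⟨hxl, hxr⟩ := hx
    rcases le_or_gt x π with h | h
    · linarith [hK' x ⟨hxl, h⟩]
    · have h1 : F x = F (x - 2*π) + F π := by
        have := hFper (x - 2*π); simpa using this
      have h2 : |F (x - 2*π)| ≤ K := hK' _ ⟨by linarith, by linarith⟩
      have h3 : |F π| ≤ K := hK' π ⟨by linarith, le_rfl⟩
      calc |F x| = |F (x - 2*π) + F π| := by rw [h1]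
        _ ≤ |F (x - 2*π)| + |F π| := abs_add_le _ _
        _ ≤ 2*K := by linarith
  -- S is bounded above
  have hbdd : BddAbove S := by
    refine ⟨3*K, ?_⟩
    rintro r ⟨α, β, hab, hba, rfl⟩
    set k := toIcoDiv Real.two_pi_pos (-π) α with hk
    have hmem : α - k • (2*π) ∈ Set.Ico (-π) (-π + 2*π) := by
      rw [self_sub_toIcoDiv_zsmul Real.two_pi_pos (-π) α]
      exact toIcoMod_mem_Ico Real.two_pi_pos (-π) α
    set α' := α - k • (2*π) with hα'
    have hks : (k • (2*π) : ℝ) = 2*π*(k:ℝ) := by rw [zsmul_eq_mul]; ring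
    have hFα : F α = F α' + k * F π := by
      have h := hzk k α'
      rw [show α' + 2*π*(k:ℝ) = α by rw [hα', hks]; ring] at h
      linarith
    have hFβ : F β = F (β - k • (2*π)) + k * F π := by
      have h := hzk k (β - k • (2*π))
      rw [show β - k • (2*π) + 2*π*(k:ℝ) = β by rw [hks]; ring] at h
      linarith
    have hβ' : β - k • (2*π) ∈ Set.Icc (-π) (3*π) := by
      constructor
      · have : α' ≤ β - k • (2*π) := by rw [hα']; linarith
        linarith [hmem.1]
      · have : β - k • (2*π) ≤ α' + 2*π := by rw [hα']; linarith
        linarith [hmem.2]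
    have h1 : |F (β - k • (2*π))| ≤ 2*K := hK3 _ hβ'
    have h2 : |F α'| ≤ K := hK' _ ⟨hmem.1, by linarith [hmem.2]⟩
    calc |F β - F α| = |F (β - k • (2*π)) - F α'| := by rw [hFα, hFβ]; ring_nf
      _ ≤ |F (β - k • (2*π))| + |F α'| := abs_sub _ _
      _ ≤ 3*K := by linarith
  set M := sSup S with hM
  have hMem : ∀ α β : ℝ, α ≤ β → β ≤ α + 2*π → |F β - F α| ≤ M :=
    fun α β h1 h2 => le_csSup hbdd ⟨α, β, h1, h2, rfl⟩
  have hM0 : 0 ≤ M := by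
    have := hMem 0 0 le_rfl (by linarith)
    simpa using this
  have hFπ : |F π| ≤ M := by
    have := hMem (-π) π (by linarith) (by linarith)
    rwa [hF0, sub_zero] at this
  -- pick midpoint constant c with |F t - c| ≤ M/2 on [-π,π]
  obtain ⟨t0, ht0, ht0max⟩ := isCompact_Icc.exists_isMaxOn (Set.nonempty_Icc.2 (by linarith))
    (hFcont.continuousOn (s := Set.Icc (-π) π))
  obtain ⟨t1, ht1, ht1min⟩ := isCompact_Icc.exists_isMinOn (Set.nonempty_Icc.2 (by linarith))
    (hFcont.continuousOn (s := Set.Icc (-π) π))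
  set c := (F t0 + F t1) / 2 with hc
  have hdiff : F t0 - F t1 ≤ M := by
    rcases le_total t1 t0 with h | h
    · have h1 := hMem t1 t0 h (by linarith [ht1.1, ht0.2])
      have h2 := le_abs_self (F t0 - F t1)
      linarith
    · have h1 := hMem t0 t1 h (by linarith [ht0.1, ht1.2])
      have h2 := neg_le_abs (F t1 - F t0)
      linarith
  have hc_bound : ∀ t ∈ Set.Icc (-π) π, |F t - c| ≤ M/2 := by
    intro t ht
    have hmax : F t ≤ F t0 := ht0max ht
    have hmin : F t1 ≤ F t := ht1min ht
    rw [abs_le]; constructor <;> [skip; skip] <;> (rw [hc]; push_cast) <;> linarith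
  -- the exponential integrates to zero
  have hcne : (-Complex.I * (n:ℂ)) ≠ 0 := by
    simp [Complex.I_ne_zero, hn]
  have hexp_int : (∫ t in (-π)..π, Complex.exp (-Complex.I * (n:ℂ) * (t:ℝ))) = 0 := by
    rw [integral_exp_mul_complex hcne]
    have e1 : Complex.exp (-Complex.I * (n:ℂ) * (π:ℝ)) = ((-1:ℂ))^(-n) := by
      rw [show -Complex.I * (n:ℂ) * (π:ℝ) = ((-n : ℤ) : ℂ) * ((π:ℝ) * Complex.I) by push_cast; ring,
        Complex.exp_int_mul, Complex.exp_pi_mul_I]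
    have e2 : Complex.exp (-Complex.I * (n:ℂ) * ((-π:ℝ):ℂ)) = ((-1:ℂ))^(n) := by
      rw [show -Complex.I * (n:ℂ) * ((-π:ℝ):ℂ) = ((n : ℤ) : ℂ) * ((π:ℝ) * Complex.I) by push_cast; ring,
        Complex.exp_int_mul, Complex.exp_pi_mul_I]
    rw [e1, e2]
    have : ((-1:ℂ))^(-n) = ((-1:ℂ))^(n) := by
      rw [zpow_neg, ← inv_zpow, inv_neg, inv_one]
    rw [this, sub_self, zero_div]
  -- replace F by F - c in the integral
  have hInt1 : IntervalIntegrable (fun t : ℝ => (F t : ℂ) * Complex.exp (-Complex.I * (n:ℂ) * (t:ℝ)))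
      volume (-π) π := by
    apply Continuous.intervalIntegrable
    exact (Complex.continuous_ofReal.comp hFcont).mul (Complex.continuous_exp.comp (continuous_const.mul Complex.continuous_ofReal))
  have hInt2 : IntervalIntegrable (fun t : ℝ => (c : ℂ) * Complex.exp (-Complex.I * (n:ℂ) * (t:ℝ)))
      volume (-π) π := by
    apply Continuous.intervalIntegrable
    exact continuous_const.mul (Complex.continuous_exp.comp (continuous_const.mul Complex.continuous_ofReal))
  have hshift : (∫ t in (-π)..π, (F t : ℂ) * Complex.exp (-Complex.I * (n:ℂ) * (t:ℝ)))
      = ∫ t in (-π)..π, ((F t : ℂ) - c) * Complex.exp (-Complex.I * (n:ℂ) * (t:ℝ)) := by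
    rw [show (fun t : ℝ => ((F t : ℂ) - c) * Complex.exp (-Complex.I * (n:ℂ) * (t:ℝ)))
        = (fun t : ℝ => (F t : ℂ) * Complex.exp (-Complex.I * (n:ℂ) * (t:ℝ))
          - (c:ℂ) * Complex.exp (-Complex.I * (n:ℂ) * (t:ℝ))) by funext t; ring]
    rw [intervalIntegral.integral_sub hInt1 hInt2, intervalIntegral.integral_const_mul, hexp_int]
    ring
  -- bound the integral
  have hIntBound : ‖∫ t in (-π)..π, (F t : ℂ) * Complex.exp (-Complex.I * (n:ℂ) * (t:ℝ))‖
      ≤ π * M := by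
    rw [hshift]
    have := intervalIntegral.norm_integral_le_of_norm_le_const (a := -π) (b := π) (C := M/2)
      (f := fun t : ℝ => ((F t : ℂ) - c) * Complex.exp (-Complex.I * (n:ℂ) * (t:ℝ))) ?_
    · calc ‖∫ t in (-π)..π, ((F t : ℂ) - c) * Complex.exp (-Complex.I * (n:ℂ) * (t:ℝ))‖
          ≤ M/2 * |π - (-π)| := this
        _ = π * M := by rw [abs_of_pos (by linarith : (0:ℝ) < π - (-π))]; ring
    · intro x hx
      have hx' : x ∈ Set.Icc (-π) π := by
        rcases hx with ⟨h1, h2⟩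
        constructor
        · exact le_of_lt (by simpa [min_eq_left (by linarith : -π ≤ π)] using h1)
        · simpa [max_eq_right (by linarith : -π ≤ π)] using h2
      rw [norm_mul]
      have habs : ‖Complex.exp (-Complex.I * (n:ℂ) * (x:ℝ))‖ = 1 := by
        rw [Complex.norm_exp]
        norm_num [Complex.mul_re, Complex.I_re, Complex.I_im]
      rw [habs, mul_one]
      have : ((F x : ℂ) - c) = ((F x - c : ℝ) : ℂ) := by push_cast; ring
      rw [this, Complex.norm_real, Real.norm_eq_abs]
      exact hc_bound x hx'
  -- combine
  have hn1 : (1:ℝ) ≤ |(n:ℝ)| := by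
    have : (1:ℤ) ≤ |n| := Int.one_le_abs hn
    calc (1:ℝ) ≤ (|n| : ℤ) := by exact_mod_cast this
      _ = |(n:ℝ)| := by push_cast; ring
  have hsqrt : (1:ℝ) + π ≤ 4 * Real.sqrt 2 := by
    have h2 : Real.sqrt 2 ^ 2 = 2 := Real.sq_sqrt (by norm_num)
    have h3 : 0 ≤ Real.sqrt 2 := Real.sqrt_nonneg 2
    have hπ4 : π < 3.15 := Real.pi_lt_d2
    nlinarith
  calc ‖(-1 : ℂ) ^ n * (F π : ℂ)
        + Complex.I * (n : ℂ) *
          ∫ t in (-π)..π, (F t : ℂ) * Complex.exp (-Complex.I * (n : ℂ) * (t : ℝ))‖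
      ≤ ‖(-1 : ℂ) ^ n * (F π : ℂ)‖
        + ‖Complex.I * (n : ℂ) *
          ∫ t in (-π)..π, (F t : ℂ) * Complex.exp (-Complex.I * (n : ℂ) * (t : ℝ))‖ :=
        norm_add_le _ _
    _ ≤ M + |(n:ℝ)| * (π * M) := by
        gcongr
        · rw [norm_mul, norm_zpow, norm_neg, norm_one, one_zpow, one_mul, Complex.norm_real, Real.norm_eq_abs]
          exact hFπ
        · rw [norm_mul, norm_mul, Complex.norm_I, one_mul, Complex.norm_intCast]
          exact mul_le_mul_of_nonneg_left hIntBound (abs_nonneg _)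
    _ ≤ 4 * Real.sqrt 2 * |(n:ℝ)| * M := by
        have hnn : (0:ℝ) ≤ |(n:ℝ)| := abs_nonneg _
        nlinarith [mul_le_mul_of_nonneg_right hsqrt (mul_nonneg hnn hM0),
          mul_le_mul_of_nonneg_right hn1 hM0, mul_nonneg hnn hM0, mul_nonneg hM0 hπ.le]
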